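/- For x ≥ 0, exp(-x²)/(x + sqrt(x² + 2)) ≤ ∫_x^∞ exp(-t²) dt ≤ exp(-x²)/(x + sqrt(x² + 4/π)). -/

import Mathlib

open Real MeasureTheory Set Filter

noncomputable def gf (t : ℝ) : ℝ := Real.exp (-t ^ 2)

lemma gf_cont : Continuous gf :=
  Real.continuous_exp.comp (continuous_pow 2).neg

lemma gf_int : Integrable gf := by
  have := integrable_exp_neg_mul_sq (b := 1) one_pos
  unfold gf
  simpa using this

noncomputable def Ig (x : ℝ) : ℝ := ∫ t in Set.Ioi x, gf t

lemma Ig_eq (x : ℝ) : Ig x = Ig 0 - ∫ t in (0:ℝ)..x, gf t := by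
  have h1 := intervalIntegral.integral_Iic_add_Ioi (μ := volume) (f := gf) (b := x)
    gf_int.integrableOn gf_int.integrableOn
  have h0 := intervalIntegral.integral_Iic_add_Ioi (μ := volume) (f := gf) (b := 0)
    gf_int.integrableOn gf_int.integrableOn
  have h2 := intervalIntegral.integral_Iic_sub_Iic (μ := volume) (f := gf) (a := (0:ℝ)) (b := x)
    gf_int.integrableOn gf_int.integrableOn
  simp only [Ig]
  linarith [h1, h0, h2]

lemma hasDerivAt_Ig (x : ℝ) : HasDerivAt Ig (-(gf x)) x := by
  have hF : HasDerivAt (fun u => ∫ t in (0:ℝ)..u, gf t) (gf x) x :=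
    (intervalIntegral.integral_hasStrictDerivAt_right
      gf_int.intervalIntegrable
      (gf_cont.stronglyMeasurableAtFilter _ _) gf_cont.continuousAt).hasDerivAt
  have : HasDerivAt (fun u => Ig 0 - ∫ t in (0:ℝ)..u, gf t) (-(gf x)) x :=
    hF.const_sub _
  exact this.congr_of_eventuallyEq (Filter.Eventually.of_forall fun y => Ig_eq y)

lemma tendsto_Ig : Tendsto Ig atTop (nhds 0) := by
  have h := intervalIntegral_tendsto_integral_Ioi (μ := volume) 0
    (gf_int.integrableOn (s := Ioi 0)) tendsto_id
  have h2 : Tendsto (fun x => Ig 0 - ∫ t in (0:ℝ)..x, gf t) atTop (nhds (Ig 0 - Ig 0)) :=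
    tendsto_const_nhds.sub h
  rw [sub_self] at h2
  exact h2.congr (fun x => (Ig_eq x).symm)

lemma Ig_zero : Ig 0 = Real.sqrt π / 2 := by
  have := integral_gaussian_Ioi 1
  simp only [Ig, gf]
  simpa using this

section G
variable (a : ℝ)

noncomputable def Ga (x : ℝ) : ℝ := Real.exp (-x ^ 2) / (x + Real.sqrt (x ^ 2 + a))

lemma sqa_pos (ha : 0 < a) (x : ℝ) : 0 < Real.sqrt (x ^ 2 + a) :=
  Real.sqrt_pos.mpr (by positivity)

lemma den_pos (ha : 0 < a) (x : ℝ) : 0 < x + Real.sqrt (x ^ 2 + a) := by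
  have h1 : |x| < Real.sqrt (x ^ 2 + a) := by
    rw [← Real.sqrt_sq_eq_abs]
    exact Real.sqrt_lt_sqrt (sq_nonneg x) (by linarith)
  have := neg_abs_le x
  linarith

lemma hasDerivAt_sqa (ha : 0 < a) (x : ℝ) :
    HasDerivAt (fun y => Real.sqrt (y ^ 2 + a)) (x / Real.sqrt (x ^ 2 + a)) x := by
  have h1 : HasDerivAt (fun y : ℝ => y ^ 2 + a) (2 * x) x := by
    simpa using (hasDerivAt_pow 2 x).add_const a
  have h2 := (Real.hasDerivAt_sqrt (by positivity : x ^ 2 + a ≠ 0)).comp x h1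
  refine h2.congr_deriv ?_
  have := (sqa_pos a ha x).ne'
  ring

noncomputable def Da (x : ℝ) : ℝ :=
  ((-2 * x) * Real.exp (-x ^ 2) * (x + Real.sqrt (x ^ 2 + a))
    - Real.exp (-x ^ 2) * (1 + x / Real.sqrt (x ^ 2 + a)))
    / (x + Real.sqrt (x ^ 2 + a)) ^ 2

lemma hasDerivAt_Ga (ha : 0 < a) (x : ℝ) : HasDerivAt (Ga a) (Da a x) x := by
  have hnum : HasDerivAt (fun y => Real.exp (-y ^ 2)) ((-2 * x) * Real.exp (-x ^ 2)) x := by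
    have h1 : HasDerivAt (fun y : ℝ => -y ^ 2) (-(2 * x)) x := by
      simpa [Pi.neg_def] using (hasDerivAt_pow 2 x).neg
    simpa [mul_comm, Function.comp_def] using (Real.hasDerivAt_exp (-x ^ 2)).comp x h1
  have hden : HasDerivAt (fun y => y + Real.sqrt (y ^ 2 + a)) (1 + x / Real.sqrt (x ^ 2 + a)) x :=
    (hasDerivAt_id x).add (hasDerivAt_sqa a ha x)
  exact hnum.div hden (den_pos a ha x).ne'

lemma tendsto_Ga (ha : 0 < a) : Tendsto (Ga a) atTop (nhds 0) := by
  have hexp : Tendsto (fun x : ℝ => Real.exp (-x ^ 2)) atTop (nhds 0) :=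
    Real.tendsto_exp_neg_atTop_nhds_zero.comp (tendsto_pow_atTop two_ne_zero)
  have hq : Tendsto (fun x : ℝ => Real.exp (-x ^ 2) / Real.sqrt a) atTop (nhds 0) := by
    simpa using hexp.div_const (Real.sqrt a)
  refine squeeze_zero' (Filter.Eventually.of_forall fun x => ?_) ?_ hq
  · exact div_nonneg (Real.exp_pos _).le (den_pos a ha x).le
  · filter_upwards [eventually_ge_atTop (0:ℝ)] with x hx
    apply div_le_div_of_nonneg_left (Real.exp_pos _).le (Real.sqrt_pos.mpr ha)
    have : Real.sqrt a ≤ Real.sqrt (x ^ 2 + a) := Real.sqrt_le_sqrt (by nlinarith)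
    linarith

end G

lemma sq_sqa (a : ℝ) (ha : 0 < a) (x : ℝ) : Real.sqrt (x ^ 2 + a) ^ 2 = x ^ 2 + a :=
  Real.sq_sqrt (by positivity)

lemma y_le_sqa (a : ℝ) (ha : 0 < a) (y : ℝ) : y ≤ Real.sqrt (y ^ 2 + a) := by
  have h1 : |y| ≤ Real.sqrt (y ^ 2 + a) := by
    rw [← Real.sqrt_sq_eq_abs]
    exact Real.sqrt_le_sqrt (by linarith)
  exact (le_abs_self y).trans h1

lemma lower_deriv (y : ℝ) : -(gf y) - Da 2 y ≤ 0 := by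
  set s := Real.sqrt (y ^ 2 + 2) with hs
  have hs2 : s ^ 2 = y ^ 2 + 2 := sq_sqa 2 two_pos y
  have hs0 : 0 < s := sqa_pos 2 two_pos y
  have hd : 0 < y + s := den_pos 2 two_pos y
  have hys : y ≤ s := y_le_sqa 2 two_pos y
  have hq : y / s ≤ 1 := (div_le_one hs0).mpr hys
  have he : 0 < Real.exp (-y ^ 2) := Real.exp_pos _
  simp only [Da, gf, ← hs]
  rw [sub_nonpos, neg_le, ← neg_div, div_le_iff₀ (by positivity : (0:ℝ) < (y + s) ^ 2)]
  nlinarith [mul_le_mul_of_nonneg_left hq he.le]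

lemma phi_anti : Antitone (fun y => Ig y - Ga 2 y) := by
  have hder : ∀ y, HasDerivAt (fun y => Ig y - Ga 2 y) (-(gf y) - Da 2 y) y :=
    fun y => (hasDerivAt_Ig y).sub (hasDerivAt_Ga 2 two_pos y)
  apply antitone_of_deriv_nonpos (fun y => (hder y).differentiableAt)
  intro y
  rw [(hder y).deriv]
  exact lower_deriv y

lemma lower_bound (x : ℝ) : Ga 2 x ≤ Ig x := by
  have ht : Tendsto (fun y => Ig y - Ga 2 y) atTop (nhds 0) := by
    simpa using tendsto_Ig.sub (tendsto_Ga 2 two_pos)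
  have h0 : (0:ℝ) ≤ Ig x - Ga 2 x := by
    refine le_of_tendsto ht ?_
    filter_upwards [eventually_ge_atTop x] with y hy
    exact phi_anti hy
  linarith

noncomputable def c4 : ℝ := 4 / Real.pi - 1
noncomputable def x0 : ℝ := Real.sqrt (c4 ^ 2 * (4 / Real.pi) / (1 - c4 ^ 2))

lemma hc0 : 0 < c4 := by
  have h4 : Real.pi < 4 := by linarith [Real.pi_lt_d2]
  have := Real.pi_pos
  have : 1 < 4 / Real.pi := (one_lt_div Real.pi_pos).mpr h4
  simp only [c4]; linarith

lemma hc1 : c4 < 1 := by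
  have h2 : 2 < Real.pi := by linarith [Real.pi_gt_three]
  have : 4 / Real.pi < 2 := (div_lt_iff₀ Real.pi_pos).mpr (by linarith)
  simp only [c4]; linarith

lemma hapi : 0 < 4 / Real.pi := by positivity

lemma hx0_nonneg : 0 ≤ x0 := Real.sqrt_nonneg _

lemma hx0_sq : x0 ^ 2 = c4 ^ 2 * (4 / Real.pi) / (1 - c4 ^ 2) := by
  have h1 : (0:ℝ) < 1 - c4 ^ 2 := by nlinarith [hc0, hc1]
  have hpi := Real.pi_pos
  exact Real.sq_sqrt (div_nonneg (by positivity) h1.le)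

lemma key_le (y : ℝ) (hy : 0 ≤ y) (h : y ≤ x0) : y ≤ c4 * Real.sqrt (y ^ 2 + 4 / Real.pi) := by
  have h1 : (0:ℝ) < 1 - c4 ^ 2 := by nlinarith [hc0, hc1]
  have hs0 : 0 < Real.sqrt (y ^ 2 + 4 / Real.pi) := sqa_pos _ hapi y
  have hs2 := sq_sqa _ hapi y
  have hsq : y ^ 2 ≤ x0 ^ 2 := by nlinarith
  rw [hx0_sq] at hsq
  have h2 : y ^ 2 * (1 - c4 ^ 2) ≤ c4 ^ 2 * (4 / Real.pi) := by
    rw [← le_div_iff₀ h1]; exact hsq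
  have h3 : y ^ 2 ≤ (c4 * Real.sqrt (y ^ 2 + 4 / Real.pi)) ^ 2 := by nlinarith
  calc y = Real.sqrt (y ^ 2) := (Real.sqrt_sq hy).symm
    _ ≤ Real.sqrt ((c4 * Real.sqrt (y ^ 2 + 4 / Real.pi)) ^ 2) := Real.sqrt_le_sqrt h3
    _ = c4 * Real.sqrt (y ^ 2 + 4 / Real.pi) := Real.sqrt_sq (mul_nonneg hc0.le (Real.sqrt_nonneg _))

lemma key_ge (y : ℝ) (h : x0 ≤ y) : c4 * Real.sqrt (y ^ 2 + 4 / Real.pi) ≤ y := by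
  have hy : 0 ≤ y := hx0_nonneg.trans h
  have h1 : (0:ℝ) < 1 - c4 ^ 2 := by nlinarith [hc0, hc1]
  have hs0 : 0 < Real.sqrt (y ^ 2 + 4 / Real.pi) := sqa_pos _ hapi y
  have hs2 := sq_sqa _ hapi y
  have hsq : x0 ^ 2 ≤ y ^ 2 := by nlinarith [hx0_nonneg]
  rw [hx0_sq] at hsq
  have h2 : c4 ^ 2 * (4 / Real.pi) ≤ y ^ 2 * (1 - c4 ^ 2) := by
    rw [← div_le_iff₀ h1]; exact hsq
  have h3 : (c4 * Real.sqrt (y ^ 2 + 4 / Real.pi)) ^ 2 ≤ y ^ 2 := by nlinarith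
  calc c4 * Real.sqrt (y ^ 2 + 4 / Real.pi)
      = Real.sqrt ((c4 * Real.sqrt (y ^ 2 + 4 / Real.pi)) ^ 2) := (Real.sqrt_sq (mul_nonneg hc0.le (Real.sqrt_nonneg _))).symm
    _ ≤ Real.sqrt (y ^ 2) := Real.sqrt_le_sqrt h3
    _ = y := Real.sqrt_sq hy

lemma upper_deriv_nonneg (y : ℝ) (hy : 0 ≤ y) (h : y ≤ x0) : 0 ≤ Da (4 / Real.pi) y + gf y := by
  set s := Real.sqrt (y ^ 2 + 4 / Real.pi) with hs
  have hs2 : s ^ 2 = y ^ 2 + 4 / Real.pi := sq_sqa _ hapi y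
  have hs0 : 0 < s := sqa_pos _ hapi y
  have hd : 0 < y + s := den_pos _ hapi y
  have he : 0 < Real.exp (-y ^ 2) := Real.exp_pos _
  have hq : y / s ≤ c4 := (div_le_iff₀ hs0).mpr (by linarith [key_le y hy h, mul_comm c4 s])
  have hc : c4 = 4 / Real.pi - 1 := rfl
  simp only [Da, gf, ← hs]
  rw [← sub_neg_eq_add, sub_nonneg, neg_le, ← neg_div,
    div_le_iff₀ (by positivity : (0:ℝ) < (y + s) ^ 2)]
  nlinarith [mul_le_mul_of_nonneg_left hq he.le]

lemma upper_deriv_nonpos (y : ℝ) (h : x0 ≤ y) : Da (4 / Real.pi) y + gf y ≤ 0 := by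
  have hy : 0 ≤ y := hx0_nonneg.trans h
  set s := Real.sqrt (y ^ 2 + 4 / Real.pi) with hs
  have hs2 : s ^ 2 = y ^ 2 + 4 / Real.pi := sq_sqa _ hapi y
  have hs0 : 0 < s := sqa_pos _ hapi y
  have hd : 0 < y + s := den_pos _ hapi y
  have he : 0 < Real.exp (-y ^ 2) := Real.exp_pos _
  have hq : c4 ≤ y / s := (le_div_iff₀ hs0).mpr (by linarith [key_ge y h, mul_comm c4 s])
  have hc : c4 = 4 / Real.pi - 1 := rfl
  simp only [Da, gf, ← hs]
  rw [← sub_neg_eq_add, sub_nonpos, le_neg, ← neg_div,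
    le_div_iff₀ (by positivity : (0:ℝ) < (y + s) ^ 2)]
  nlinarith [mul_le_mul_of_nonneg_left hq he.le]

noncomputable def psi (y : ℝ) : ℝ := Ga (4 / Real.pi) y - Ig y

lemma hasDerivAt_psi (y : ℝ) : HasDerivAt psi (Da (4 / Real.pi) y + gf y) y := by
  have := (hasDerivAt_Ga (4 / Real.pi) hapi y).sub (hasDerivAt_Ig y)
  unfold psi
  simpa [sub_neg_eq_add, Pi.sub_def] using this

lemma psi_zero : psi 0 = 0 := by
  have hpi := Real.pi_pos
  have hsp : 0 < Real.sqrt Real.pi := Real.sqrt_pos.mpr hpi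
  have h4 : Real.sqrt (4 / Real.pi) = 2 / Real.sqrt Real.pi := by
    rw [Real.sqrt_div (by norm_num) Real.pi, show (4:ℝ) = 2 ^ 2 by norm_num,
      Real.sqrt_sq (by norm_num)]
  simp only [psi, Ga, Ig_zero]
  norm_num [h4]

lemma tendsto_psi : Tendsto psi atTop (nhds 0) := by
  unfold psi
  simpa [psi] using (tendsto_Ga (4 / Real.pi) hapi).sub tendsto_Ig

lemma psi_mono : MonotoneOn psi (Icc 0 x0) := by
  apply monotoneOn_of_deriv_nonneg (convex_Icc 0 x0)
  · exact fun y _ => ((hasDerivAt_psi y).differentiableAt).continuousAt.continuousWithinAt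
  · exact fun y _ => ((hasDerivAt_psi y).differentiableAt).differentiableWithinAt
  · intro y hy
    rw [interior_Icc] at hy
    rw [(hasDerivAt_psi y).deriv]
    exact upper_deriv_nonneg y hy.1.le hy.2.le

lemma psi_anti : AntitoneOn psi (Ici x0) := by
  apply antitoneOn_of_deriv_nonpos (convex_Ici x0)
  · exact fun y _ => ((hasDerivAt_psi y).differentiableAt).continuousAt.continuousWithinAt
  · exact fun y _ => ((hasDerivAt_psi y).differentiableAt).differentiableWithinAt
  · intro y hy
    rw [interior_Ici] at hy
    rw [(hasDerivAt_psi y).deriv]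
    exact upper_deriv_nonpos y hy.le

lemma upper_bound (x : ℝ) (hx : 0 ≤ x) : Ig x ≤ Ga (4 / Real.pi) x := by
  have h0 : (0:ℝ) ≤ psi x := by
    rcases le_total x x0 with h | h
    · have := psi_mono (left_mem_Icc.mpr hx0_nonneg) ⟨hx, h⟩ hx
      rwa [psi_zero] at this
    · refine le_of_tendsto tendsto_psi ?_
      filter_upwards [eventually_ge_atTop x] with y hy
      exact psi_anti (by exact h) (h.trans hy) hy
  simp only [psi] at h0
  linarith

theorem gaussian_tail_bounds (x : ℝ) (hx : 0 ≤ x) :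
    Real.exp (-x ^ 2) / (x + Real.sqrt (x ^ 2 + 2)) ≤
        (∫ t in Set.Ioi x, Real.exp (-t ^ 2)) ∧
      (∫ t in Set.Ioi x, Real.exp (-t ^ 2)) ≤
        Real.exp (-x ^ 2) / (x + Real.sqrt (x ^ 2 + 4 / Real.pi)) :=
  ⟨lower_bound x, upper_bound x hx⟩
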